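/- The mixed proper Gramian P̃_p := ∫₀^∞ F_J(t)·B·B̂^T·F̂_J(t)^T dt is well defined and solves the projected Sylvester equation A·P̃_p·Ê^T + E·P̃_p·Â^T = −P_l·B·B̂^T·P̂_l^T together with the projection condition P̃_p = P_r·P̃_p·P̂_r^T. -/

import Mathlib

open MeasureTheory Matrix
open scoped NNReal

/-- The matrix exponential of a real square matrix. -/
noncomputable def mexp {d : ℕ} (X : Matrix (Fin d) (Fin d) ℝ) : Matrix (Fin d) (Fin d) ℝ :=
  NormedSpace.exp X

/-- The operator norm on real matrices, induced by the Euclidean (`ℓ²`) norms. -/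
noncomputable def opNorm {d e : ℕ} (X : Matrix (Fin d) (Fin e) ℝ) : ℝ :=
  letI := Matrix.instL2OpNormedAddCommGroup (m := Fin d) (n := Fin e) (𝕜 := ℝ)
  ‖X‖

/-- Entrywise integral over `(0, ∞)` of a matrix-valued function. -/
noncomputable def matIntIoi {a b : Type*} (F : ℝ → Matrix a b ℝ) : Matrix a b ℝ :=
  Matrix.of fun i j => ∫ t in Set.Ioi (0:ℝ), F t i j

/-- Entrywise integrability over `(0, ∞)` of a matrix-valued function. -/
def MatIntegrableIoi {a b : Type*} (F : ℝ → Matrix a b ℝ) : Prop :=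
  ∀ i j, MeasureTheory.IntegrableOn (fun t => F t i j) (Set.Ioi 0)

/-- Kronecker product of two vectors in `ℝ^m`, an element of `ℝ^{m²}`. -/
def kron {m : ℕ} (a b : Fin m → ℝ) : Fin m × Fin m → ℝ := fun p => a p.1 * b p.2

/-- Vectorization of an `m × m` matrix as an element of `ℝ^{m²}`. -/
def vecm {m : ℕ} (X : Matrix (Fin m) (Fin m) ℝ) : Fin m × Fin m → ℝ := fun p => X p.1 p.2

/-- Squared Euclidean norm of a vector. -/
def enormSq {ι : Type*} [Fintype ι] (v : ι → ℝ) : ℝ := ∑ i, (v i) ^ 2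

/-- Euclidean inner product of two vectors. -/
def dotv {ι : Type*} [Fintype ι] (v w : ι → ℝ) : ℝ := ∑ i, v i * w i

lemma abs_entry_le_opNorm {d e : ℕ} (X : Matrix (Fin d) (Fin e) ℝ) (i : Fin d) (j : Fin e) :
    |X i j| ≤ opNorm X := by
  letI := Matrix.instL2OpNormedAddCommGroup (m := Fin d) (n := Fin e) (𝕜 := ℝ)
  have h := X.l2_opNorm_mulVec (EuclideanSpace.single j (1:ℝ))
  rw [EuclideanSpace.norm_single, norm_one, mul_one] at h
  set v : EuclideanSpace ℝ (Fin d) :=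
    (EuclideanSpace.equiv (Fin d) ℝ).symm (X *ᵥ (EuclideanSpace.single j (1:ℝ))) with hvdef
  have hv : v i = X i j := by
    show (X *ᵥ (EuclideanSpace.single j (1:ℝ))) i = X i j
    simp [Matrix.mulVec, dotProduct, EuclideanSpace.single_apply, mul_ite]
  have h2 : |v i| ≤ ‖v‖ := by
    rw [EuclideanSpace.norm_eq, ← Real.sqrt_sq_eq_abs (v i)]
    apply Real.sqrt_le_sqrt
    calc v i ^ 2 = ‖v i‖ ^ 2 := by rw [Real.norm_eq_abs, sq_abs]
      _ ≤ ∑ k, ‖v k‖ ^ 2 := Finset.single_le_sum (f := fun k => ‖v k‖ ^ 2)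
            (fun k _ => sq_nonneg _) (Finset.mem_univ i)
  have hop : opNorm X = ‖X‖ := rfl
  rw [hop, ← hv]
  exact h2.trans h

lemma hasDerivAt_mexp_entry {d : ℕ} (X : Matrix (Fin d) (Fin d) ℝ) (t : ℝ) (a b : Fin d) :
    HasDerivAt (fun u : ℝ => mexp (u • X) a b) ((X * mexp (t • X)) a b) t := by
  letI : SeminormedRing (Matrix (Fin d) (Fin d) ℝ) := Matrix.linftyOpSemiNormedRing
  letI : NormedRing (Matrix (Fin d) (Fin d) ℝ) := Matrix.linftyOpNormedRing
  letI : NormedAlgebra ℝ (Matrix (Fin d) (Fin d) ℝ) := Matrix.linftyOpNormedAlgebra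
  have H : HasDerivAt (fun u : ℝ => NormedSpace.exp (u • X))
      (X * NormedSpace.exp (t • X)) t := hasDerivAt_exp_smul_const' X t
  let L0 : Matrix (Fin d) (Fin d) ℝ →ₗ[ℝ] ℝ :=
    { toFun := fun M => M a b, map_add' := fun _ _ => rfl, map_smul' := fun _ _ => rfl }
  have hb : ∀ M : Matrix (Fin d) (Fin d) ℝ, ‖L0 M‖ ≤ 1 * ‖M‖ := by
    intro M
    rw [one_mul, Matrix.linfty_opNorm_def]
    have h1 : ‖M a b‖₊ ≤ ∑ j, ‖M a j‖₊ :=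
      Finset.single_le_sum (f := fun j => ‖M a j‖₊) (fun _ _ => zero_le) (Finset.mem_univ b)
    have h2 : (∑ j, ‖M a j‖₊) ≤ (Finset.univ : Finset (Fin d)).sup fun i => ∑ j, ‖M i j‖₊ :=
      Finset.le_sup (f := fun i : Fin d => ∑ j : Fin d, ‖M i j‖₊) (Finset.mem_univ a)
    calc ‖L0 M‖ = ((‖M a b‖₊ : ℝ≥0) : ℝ) := rfl
      _ ≤ _ := NNReal.coe_le_coe.mpr (h1.trans h2)
  let L : Matrix (Fin d) (Fin d) ℝ →L[ℝ] ℝ := LinearMap.mkContinuous L0 1 hb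
  exact L.hasFDerivAt.comp_hasDerivAt t H

lemma mexp_zero_smul {d : ℕ} (X : Matrix (Fin d) (Fin d) ℝ) : mexp ((0:ℝ) • X) = 1 := by
  rw [zero_smul]
  exact NormedSpace.exp_zero (𝔸 := Matrix (Fin d) (Fin d) ℝ)

section MulInt

variable {p q r s : Type*} [Fintype q] [Fintype r]

lemma entry_LFR {L : Matrix p q ℝ} {R : Matrix r s ℝ} (F : Matrix q r ℝ) (i : p) (j : s) :
    (L * F * R) i j = ∑ l : r, ∑ k : q, (L i k * R l j) * F k l := by
  simp only [Matrix.mul_apply, Finset.sum_mul]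
  refine Finset.sum_congr rfl fun l _ => Finset.sum_congr rfl fun k _ => by ring

lemma matIntegrable_mul {L : Matrix p q ℝ} {F : ℝ → Matrix q r ℝ} {R : Matrix r s ℝ}
    (hF : MatIntegrableIoi F) :
    MatIntegrableIoi (fun t => L * F t * R) := by
  intro i j
  have h : (fun t => (L * F t * R) i j)
      = fun t => ∑ l : r, ∑ k : q, (L i k * R l j) * F t k l := by
    funext t; exact entry_LFR (F t) i j
  rw [IntegrableOn, h]
  exact integrable_finset_sum _ fun l _ =>
    integrable_finset_sum _ fun k _ => (hF k l).const_mul _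

lemma matIntIoi_mul (L : Matrix p q ℝ) (F : ℝ → Matrix q r ℝ) (R : Matrix r s ℝ)
    (hF : MatIntegrableIoi F) :
    matIntIoi (fun t => L * F t * R) = L * matIntIoi F * R := by
  ext i j
  show (∫ t in Set.Ioi (0:ℝ), (L * F t * R) i j) = (L * matIntIoi F * R) i j
  rw [entry_LFR (matIntIoi F) i j]
  have h1 : (fun t => (L * F t * R) i j)
      = fun t => ∑ l : r, ∑ k : q, (L i k * R l j) * F t k l := by
    funext t; exact entry_LFR (F t) i j
  rw [h1, integral_finset_sum _ fun l _ =>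
    integrable_finset_sum _ fun k _ => (hF k l).const_mul _]
  refine Finset.sum_congr rfl fun l _ => ?_
  rw [integral_finset_sum _ fun k _ => (hF k l).const_mul _]
  refine Finset.sum_congr rfl fun k _ => ?_
  rw [integral_const_mul]
  rfl

end MulInt

/-- The mixed proper Gramian `P̃_p = ∫₀^∞ F_J(t)·B·B̂ᵀ·F̂_J(t)ᵀ dt` is well
defined and solves the projected Sylvester equation
`A·P̃_p·Êᵀ + E·P̃_p·Âᵀ = −P_l·B·B̂ᵀ·P̂_lᵀ` together with `P̃_p = P_r·P̃_p·P̂_rᵀ`. -/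
theorem mixed_proper_gramian_sylvester
    {nf ni m : ℕ} (hm : 0 < m) (ν : ℕ) (hν : 0 < ν)
    -- Weierstraß canonical form data for the full-order system
    (W T Winv Tinv : Matrix (Fin nf ⊕ Fin ni) (Fin nf ⊕ Fin ni) ℝ)
    (hW : W * Winv = 1) (hW' : Winv * W = 1)
    (hT : T * Tinv = 1) (hT' : Tinv * T = 1)
    (J : Matrix (Fin nf) (Fin nf) ℝ) (N : Matrix (Fin ni) (Fin ni) ℝ) (hN : N ^ ν = 0)
    (C α : ℝ) (hC : 0 < C) (hα : 0 < α)
    (hJ : ∀ t : ℝ, 0 ≤ t → opNorm (mexp (t • J)) ≤ C * Real.exp (-α * t))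
    (E A : Matrix (Fin nf ⊕ Fin ni) (Fin nf ⊕ Fin ni) ℝ)
    (hE : E = W * fromBlocks 1 0 0 N * T)
    (hA : A = W * fromBlocks J 0 0 1 * T)
    (B : Matrix (Fin nf ⊕ Fin ni) (Fin m) ℝ)
    (M : Matrix (Fin nf ⊕ Fin ni) (Fin nf ⊕ Fin ni) ℝ) (hM : M.IsSymm)
    -- spectral projectors
    (Pr Pl : Matrix (Fin nf ⊕ Fin ni) (Fin nf ⊕ Fin ni) ℝ)
    (hPr : Pr = Tinv * fromBlocks 1 0 0 0 * T)
    (hPl : Pl = W * fromBlocks 1 0 0 0 * Winv)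
    -- fundamental solution matrices
    (FJ : ℝ → Matrix (Fin nf ⊕ Fin ni) (Fin nf ⊕ Fin ni) ℝ)
    (hFJ : ∀ t : ℝ, FJ t = Tinv * fromBlocks (mexp (t • J)) 0 0 0 * Winv)
    (FN : ℕ → Matrix (Fin nf ⊕ Fin ni) (Fin nf ⊕ Fin ni) ℝ)
    (hFN : ∀ k : ℕ, FN k = Tinv * fromBlocks 0 0 0 (-(N ^ k)) * Winv)
    -- proper and improper controllability Gramians
    (Pp : Matrix (Fin nf ⊕ Fin ni) (Fin nf ⊕ Fin ni) ℝ)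
    (hPp : Pp = matIntIoi fun t => FJ t * B * Bᵀ * (FJ t)ᵀ)
    (Pimp : Matrix (Fin nf ⊕ Fin ni) (Fin nf ⊕ Fin ni) ℝ)
    (hPimp : Pimp = ∑ k ∈ Finset.range ν, FN k * B * Bᵀ * (FN k)ᵀ)
    -- reduced-order data
    {rf ri : ℕ}
    (A1r : Matrix (Fin rf) (Fin rf) ℝ) (E2r : Matrix (Fin ri) (Fin ri) ℝ) (hE2r : E2r ^ ν = 0)
    (Cr αr : ℝ) (hCr : 0 < Cr) (hαr : 0 < αr)
    (hA1r : ∀ t : ℝ, 0 ≤ t → opNorm (mexp (t • A1r)) ≤ Cr * Real.exp (-αr * t))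
    (Br : Matrix (Fin rf ⊕ Fin ri) (Fin m) ℝ)
    (Mr : Matrix (Fin rf ⊕ Fin ri) (Fin rf ⊕ Fin ri) ℝ) (hMr : Mr.IsSymm)
    (FJr : ℝ → Matrix (Fin rf ⊕ Fin ri) (Fin rf ⊕ Fin ri) ℝ)
    (hFJr : ∀ t : ℝ, FJr t = fromBlocks (mexp (t • A1r)) 0 0 0)
    (FNr : ℕ → Matrix (Fin rf ⊕ Fin ri) (Fin rf ⊕ Fin ri) ℝ)
    (hFNr : ∀ k : ℕ, FNr k = fromBlocks 0 0 0 (-(E2r ^ k)))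
    -- reduced-order matrices and projectors
    (Er Ar : Matrix (Fin rf ⊕ Fin ri) (Fin rf ⊕ Fin ri) ℝ)
    (hEr : Er = fromBlocks 1 0 0 E2r) (hAr : Ar = fromBlocks A1r 0 0 1)
    (Plr Prr : Matrix (Fin rf ⊕ Fin ri) (Fin rf ⊕ Fin ri) ℝ)
    (hPlr : Plr = fromBlocks 1 0 0 0) (hPrr : Prr = fromBlocks 1 0 0 0)
    -- the mixed proper Gramian
    (Ptp : Matrix (Fin nf ⊕ Fin ni) (Fin rf ⊕ Fin ri) ℝ)
    (hPtp : Ptp = matIntIoi fun t => FJ t * B * Brᵀ * (FJr t)ᵀ) :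
    MatIntegrableIoi (fun t => FJ t * B * Brᵀ * (FJr t)ᵀ) ∧
      A * Ptp * Erᵀ + E * Ptp * Arᵀ = -(Pl * B * Brᵀ * Plrᵀ) ∧
      Ptp = Pr * Ptp * Prrᵀ := by
    classical
  -- block decomposition of `Winv * B * Brᵀ`
  set U11 : Matrix (Fin nf) (Fin rf) ℝ := (Winv * B * Brᵀ).toBlocks₁₁ with hU11
  have hUdec : Winv * B * Brᵀ = fromBlocks U11 ((Winv * B * Brᵀ).toBlocks₁₂)
      ((Winv * B * Brᵀ).toBlocks₂₁) ((Winv * B * Brᵀ).toBlocks₂₂) :=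
    (fromBlocks_toBlocks _).symm
  -- transposes of the reduced block matrices
  have hPrrT : Prrᵀ = fromBlocks (1 : Matrix (Fin rf) (Fin rf) ℝ) 0 0
      (0 : Matrix (Fin ri) (Fin ri) ℝ) := by
    rw [hPrr, Matrix.fromBlocks_transpose]; simp
  have hPlrT : Plrᵀ = fromBlocks (1 : Matrix (Fin rf) (Fin rf) ℝ) 0 0
      (0 : Matrix (Fin ri) (Fin ri) ℝ) := by
    rw [hPlr, Matrix.fromBlocks_transpose]; simp
  have hErT : Erᵀ = fromBlocks (1 : Matrix (Fin rf) (Fin rf) ℝ) 0 0 E2rᵀ := by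
    rw [hEr, Matrix.fromBlocks_transpose]; simp
  have hArT : Arᵀ = fromBlocks A1rᵀ 0 0 (1 : Matrix (Fin ri) (Fin ri) ℝ) := by
    rw [hAr, Matrix.fromBlocks_transpose]; simp
  have hFJrT : ∀ t : ℝ, (FJr t)ᵀ = fromBlocks (mexp (t • A1r))ᵀ 0 0
      (0 : Matrix (Fin ri) (Fin ri) ℝ) := by
    intro t; rw [hFJr, Matrix.fromBlocks_transpose]; simp
  -- cancellation helper
  have cancelT : ∀ X : Matrix (Fin nf ⊕ Fin ni) (Fin rf ⊕ Fin ri) ℝ,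
      T * (Tinv * X) = X := by
    intro X; rw [← Matrix.mul_assoc, hT, Matrix.one_mul]
  -- middle block products
  have hmid : ∀ t : ℝ,
      fromBlocks (mexp (t • J)) 0 0 (0 : Matrix (Fin ni) (Fin ni) ℝ) * (Winv * B * Brᵀ) *
        fromBlocks (mexp (t • A1r))ᵀ 0 0 (0 : Matrix (Fin ri) (Fin ri) ℝ)
      = fromBlocks (mexp (t • J) * U11 * (mexp (t • A1r))ᵀ) 0 0 0 := by
    intro t; rw [hUdec]; simp [Matrix.fromBlocks_multiply]
  have hmid0 : fromBlocks (1 : Matrix (Fin nf) (Fin nf) ℝ) 0 0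
        (0 : Matrix (Fin ni) (Fin ni) ℝ) * (Winv * B * Brᵀ) *
        fromBlocks (1 : Matrix (Fin rf) (Fin rf) ℝ) 0 0 (0 : Matrix (Fin ri) (Fin ri) ℝ)
      = fromBlocks U11 0 0 0 := by
    rw [hUdec]; simp [Matrix.fromBlocks_multiply]
  -- the key representation of the integrand
  have key : ∀ t : ℝ, FJ t * B * Brᵀ * (FJr t)ᵀ
      = Tinv * fromBlocks (mexp (t • J) * U11 * (mexp (t • A1r))ᵀ) 0 0 (0 : Matrix (Fin ni) (Fin ri) ℝ) := by
    intro t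
    rw [hFJ t, hFJrT t, ← hmid t]
    simp only [Matrix.mul_assoc]
  -- representation of `Pl * B * Brᵀ * Plrᵀ`
  have hPlB : Pl * B * Brᵀ * Plrᵀ = W * fromBlocks U11 0 0 (0 : Matrix (Fin ni) (Fin ri) ℝ) := by
    rw [hPl, hPlrT, ← hmid0]
    simp only [Matrix.mul_assoc]
  -- entrywise representation of `P * U11 * Qᵀ`
  have hrepr : ∀ (P : Matrix (Fin nf) (Fin nf) ℝ) (Q : Matrix (Fin rf) (Fin rf) ℝ)
      (a : Fin nf) (d : Fin rf),
      (P * U11 * Qᵀ) a d = ∑ c : Fin rf, ∑ b : Fin nf, P a b * U11 b c * Q d c := by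
    intro P Q a d
    simp only [Matrix.mul_apply, Matrix.transpose_apply, Finset.sum_mul]
  -- derivative of the entries of the middle factor
  have hMderiv : ∀ (t : ℝ) (a : Fin nf) (d : Fin rf),
      HasDerivAt (fun u : ℝ => (mexp (u • J) * U11 * (mexp (u • A1r))ᵀ) a d)
        ((J * (mexp (t • J) * U11 * (mexp (t • A1r))ᵀ)
          + (mexp (t • J) * U11 * (mexp (t • A1r))ᵀ) * A1rᵀ) a d) t := by
    intro t a d
    have hterm : ∀ (c : Fin rf) (b : Fin nf),
        HasDerivAt (fun u : ℝ => mexp (u • J) a b * U11 b c * mexp (u • A1r) d c)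
          ((J * mexp (t • J)) a b * U11 b c * mexp (t • A1r) d c
            + mexp (t • J) a b * U11 b c * (A1r * mexp (t • A1r)) d c) t := by
      intro c b
      have h1 := (hasDerivAt_mexp_entry J t a b).mul_const (U11 b c)
      have h2 := hasDerivAt_mexp_entry A1r t d c
      exact h1.mul h2
    have hsum : HasDerivAt
        (fun u : ℝ => ∑ c : Fin rf, ∑ b : Fin nf,
          mexp (u • J) a b * U11 b c * mexp (u • A1r) d c)
        (∑ c : Fin rf, ∑ b : Fin nf,
          ((J * mexp (t • J)) a b * U11 b c * mexp (t • A1r) d c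
            + mexp (t • J) a b * U11 b c * (A1r * mexp (t • A1r)) d c)) t :=
      HasDerivAt.fun_sum fun c _ => HasDerivAt.fun_sum fun b _ => hterm c b
    have e1 : (fun u : ℝ => (mexp (u • J) * U11 * (mexp (u • A1r))ᵀ) a d)
        = fun u : ℝ => ∑ c : Fin rf, ∑ b : Fin nf,
            mexp (u • J) a b * U11 b c * mexp (u • A1r) d c :=
      funext fun u => hrepr _ _ a d
    rw [e1]
    convert hsum using 1
    rw [Matrix.add_apply]
    have hA' : (J * (mexp (t • J) * U11 * (mexp (t • A1r))ᵀ)) a d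
        = ∑ c : Fin rf, ∑ b : Fin nf,
            (J * mexp (t • J)) a b * U11 b c * mexp (t • A1r) d c := by
      rw [show J * (mexp (t • J) * U11 * (mexp (t • A1r))ᵀ)
          = (J * mexp (t • J)) * U11 * (mexp (t • A1r))ᵀ by
        simp only [Matrix.mul_assoc]]
      exact hrepr _ _ a d
    have hB' : ((mexp (t • J) * U11 * (mexp (t • A1r))ᵀ) * A1rᵀ) a d
        = ∑ c : Fin rf, ∑ b : Fin nf,
            mexp (t • J) a b * U11 b c * (A1r * mexp (t • A1r)) d c := by
      rw [show (mexp (t • J) * U11 * (mexp (t • A1r))ᵀ) * A1rᵀ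
          = mexp (t • J) * U11 * (A1r * mexp (t • A1r))ᵀ by
        rw [Matrix.transpose_mul]; simp only [Matrix.mul_assoc]]
      exact hrepr _ _ a d
    rw [hA', hB', ← Finset.sum_add_distrib]
    refine Finset.sum_congr rfl fun c _ => ?_
    rw [← Finset.sum_add_distrib]
  -- the uniform exponential bound on the entries of the middle factor
  set K : ℝ := (∑ c : Fin rf, ∑ b : Fin nf, |U11 b c|) * (C * Cr) with hK
  have hMbound : ∀ t : ℝ, 0 ≤ t → ∀ (a : Fin nf) (d : Fin rf),
      |(mexp (t • J) * U11 * (mexp (t • A1r))ᵀ) a d| ≤ K * Real.exp (-(α + αr) * t) := by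
    intro t ht a d
    rw [hrepr _ _ a d]
    have hterm : ∀ (c : Fin rf) (b : Fin nf),
        |mexp (t • J) a b * U11 b c * mexp (t • A1r) d c|
          ≤ |U11 b c| * (C * Cr * Real.exp (-(α + αr) * t)) := by
      intro c b
      have h1 : |mexp (t • J) a b| ≤ C * Real.exp (-α * t) :=
        (abs_entry_le_opNorm _ a b).trans (hJ t ht)
      have h2 : |mexp (t • A1r) d c| ≤ Cr * Real.exp (-αr * t) :=
        (abs_entry_le_opNorm _ d c).trans (hA1r t ht)
      have he : Real.exp (-(α + αr) * t) = Real.exp (-α * t) * Real.exp (-αr * t) := by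
        rw [← Real.exp_add]; ring_nf
      rw [abs_mul, abs_mul]
      calc |mexp (t • J) a b| * |U11 b c| * |mexp (t • A1r) d c|
          ≤ (C * Real.exp (-α * t)) * |U11 b c| * (Cr * Real.exp (-αr * t)) := by
            refine mul_le_mul (mul_le_mul h1 le_rfl (abs_nonneg _) ?_) h2 (abs_nonneg _) ?_
            · positivity
            · positivity
        _ = |U11 b c| * (C * Cr * Real.exp (-(α + αr) * t)) := by rw [he]; ring
    refine ((Finset.abs_sum_le_sum_abs _ _).trans
      ((Finset.sum_le_sum fun c _ => Finset.abs_sum_le_sum_abs _ _).trans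
        (Finset.sum_le_sum fun c _ => Finset.sum_le_sum fun b _ => hterm c b))).trans ?_
    have : K * Real.exp (-(α + αr) * t)
        = ∑ c : Fin rf, ∑ b : Fin nf, |U11 b c| * (C * Cr * Real.exp (-(α + αr) * t)) := by
      rw [hK, mul_assoc, Finset.sum_mul]
      refine Finset.sum_congr rfl fun c _ => ?_
      rw [Finset.sum_mul]
    rw [this]
  -- integrability of the entries of the middle factor
  have hαsum : (0:ℝ) < α + αr := by linarith
  have hexpInt : IntegrableOn (fun t : ℝ => K * Real.exp (-(α + αr) * t)) (Set.Ioi 0) :=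
    (exp_neg_integrableOn_Ioi 0 hαsum).const_mul K
  have hMint : ∀ (a : Fin nf) (d : Fin rf),
      IntegrableOn (fun t : ℝ => (mexp (t • J) * U11 * (mexp (t • A1r))ᵀ) a d) (Set.Ioi 0) := by
    intro a d
    have hcont : Continuous (fun t : ℝ => (mexp (t • J) * U11 * (mexp (t • A1r))ᵀ) a d) :=
      continuous_iff_continuousAt.mpr fun t => (hMderiv t a d).continuousAt
    refine Integrable.mono' hexpInt hcont.aestronglyMeasurable ?_
    filter_upwards [ae_restrict_mem measurableSet_Ioi] with x hx
    rw [Real.norm_eq_abs]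
    exact hMbound x (le_of_lt hx) a d
  -- integrability of the entries of the integrand
  have hblockInt : ∀ (q : Fin nf ⊕ Fin ni) (j : Fin rf ⊕ Fin ri),
      IntegrableOn (fun t : ℝ =>
        (fromBlocks (mexp (t • J) * U11 * (mexp (t • A1r))ᵀ) 0 0
          (0 : Matrix (Fin ni) (Fin ri) ℝ)) q j) (Set.Ioi 0) := by
    rintro (a | a) (d | d)
    · simpa only [Matrix.fromBlocks_apply₁₁] using hMint a d
    · simp only [Matrix.fromBlocks_apply₁₂, Matrix.zero_apply]
      exact integrableOn_zero
    · simp only [Matrix.fromBlocks_apply₂₁, Matrix.zero_apply]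
      exact integrableOn_zero
    · simp only [Matrix.fromBlocks_apply₂₂, Matrix.zero_apply]
      exact integrableOn_zero
  have hGint : MatIntegrableIoi (fun t => FJ t * B * Brᵀ * (FJr t)ᵀ) := by
    intro i j
    have h : (fun t : ℝ => (FJ t * B * Brᵀ * (FJr t)ᵀ) i j)
        = fun t : ℝ => ∑ q, Tinv i q *
            (fromBlocks (mexp (t • J) * U11 * (mexp (t • A1r))ᵀ) 0 0
              (0 : Matrix (Fin ni) (Fin ri) ℝ)) q j := by
      funext t; rw [key t]; simp [Matrix.mul_apply]
    rw [IntegrableOn, h]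
    exact integrable_finset_sum _ fun q _ => (hblockInt q j).const_mul _
  refine ⟨hGint, ?_, ?_⟩
  · -- the Sylvester equation
    -- the "integrated" integrand
    have hS : ∀ t : ℝ,
        A * (FJ t * B * Brᵀ * (FJr t)ᵀ) * Erᵀ + E * (FJ t * B * Brᵀ * (FJr t)ᵀ) * Arᵀ
        = W * fromBlocks
            (J * (mexp (t • J) * U11 * (mexp (t • A1r))ᵀ)
              + (mexp (t • J) * U11 * (mexp (t • A1r))ᵀ) * A1rᵀ) 0 0
              (0 : Matrix (Fin ni) (Fin ri) ℝ) := by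
      intro t
      rw [key t, hA, hE, hErT, hArT]
      rw [show W * fromBlocks J 0 0 1 * T *
            (Tinv * fromBlocks (mexp (t • J) * U11 * (mexp (t • A1r))ᵀ) 0 0
              (0 : Matrix (Fin ni) (Fin ri) ℝ)) *
            fromBlocks (1 : Matrix (Fin rf) (Fin rf) ℝ) 0 0 E2rᵀ
          = W * ((fromBlocks J 0 0 1 : Matrix (Fin nf ⊕ Fin ni) (Fin nf ⊕ Fin ni) ℝ) * (T * (Tinv *
              (fromBlocks (mexp (t • J) * U11 * (mexp (t • A1r))ᵀ) 0 0
                (0 : Matrix (Fin ni) (Fin ri) ℝ) *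
                fromBlocks (1 : Matrix (Fin rf) (Fin rf) ℝ) 0 0 E2rᵀ)))) by
        simp only [Matrix.mul_assoc]]
      rw [show W * fromBlocks 1 0 0 N * T *
            (Tinv * fromBlocks (mexp (t • J) * U11 * (mexp (t • A1r))ᵀ) 0 0
              (0 : Matrix (Fin ni) (Fin ri) ℝ)) *
            fromBlocks A1rᵀ 0 0 (1 : Matrix (Fin ri) (Fin ri) ℝ)
          = W * ((fromBlocks 1 0 0 N : Matrix (Fin nf ⊕ Fin ni) (Fin nf ⊕ Fin ni) ℝ) * (T * (Tinv *
              (fromBlocks (mexp (t • J) * U11 * (mexp (t • A1r))ᵀ) 0 0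
                (0 : Matrix (Fin ni) (Fin ri) ℝ) *
                fromBlocks A1rᵀ 0 0 (1 : Matrix (Fin ri) (Fin ri) ℝ))))) by
        simp only [Matrix.mul_assoc]]
      rw [cancelT, cancelT]
      rw [← Matrix.mul_add]
      congr 1
      simp [Matrix.fromBlocks_multiply, Matrix.fromBlocks_add]
    -- entry derivatives of  t ↦ W * fromBlocks (middle t) 0 0 0
    have hhderiv : ∀ (i : Fin nf ⊕ Fin ni) (j : Fin rf ⊕ Fin ri) (t : ℝ),
        HasDerivAt (fun u : ℝ =>
            (W * fromBlocks (mexp (u • J) * U11 * (mexp (u • A1r))ᵀ) 0 0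
              (0 : Matrix (Fin ni) (Fin ri) ℝ)) i j)
          ((W * fromBlocks
            (J * (mexp (t • J) * U11 * (mexp (t • A1r))ᵀ)
              + (mexp (t • J) * U11 * (mexp (t • A1r))ᵀ) * A1rᵀ) 0 0
              (0 : Matrix (Fin ni) (Fin ri) ℝ)) i j) t := by
      intro i j t
      simp only [Matrix.mul_apply]
      refine HasDerivAt.fun_sum fun q _ => ?_
      rcases q with a | a
      · rcases j with d | d
        · simp only [Matrix.fromBlocks_apply₁₁]
          exact HasDerivAt.const_mul (W i (Sum.inl a)) (hMderiv t a d)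
        · simp only [Matrix.fromBlocks_apply₁₂, Matrix.zero_apply, mul_zero]
          exact hasDerivAt_const t 0
      · rcases j with d | d
        · simp only [Matrix.fromBlocks_apply₂₁, Matrix.zero_apply, mul_zero]
          exact hasDerivAt_const t 0
        · simp only [Matrix.fromBlocks_apply₂₂, Matrix.zero_apply, mul_zero]
          exact hasDerivAt_const t 0
    -- limit at infinity
    have hMtend : ∀ (a : Fin nf) (d : Fin rf),
        Filter.Tendsto (fun t : ℝ => (mexp (t • J) * U11 * (mexp (t • A1r))ᵀ) a d)
          Filter.atTop (nhds 0) := by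
      intro a d
      have h0 : Filter.Tendsto (fun t : ℝ => Real.exp (-(α + αr) * t))
          Filter.atTop (nhds 0) := by
        have h1 : Filter.Tendsto (fun t : ℝ => -(α + αr) * t) Filter.atTop Filter.atBot := by
          have := Filter.tendsto_id.const_mul_atTop_of_neg (r := -(α + αr))
            (l := Filter.atTop) (by linarith)
          simpa using this
        exact Real.tendsto_exp_atBot.comp h1
      have hKexp : Filter.Tendsto (fun t : ℝ => K * Real.exp (-(α + αr) * t))
          Filter.atTop (nhds 0) := by
        simpa using h0.const_mul K
      refine squeeze_zero_norm' ?_ hKexp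
      filter_upwards [Filter.eventually_ge_atTop (0:ℝ)] with t ht
      rw [Real.norm_eq_abs]
      exact hMbound t ht a d
    have hhtend : ∀ (i : Fin nf ⊕ Fin ni) (j : Fin rf ⊕ Fin ri),
        Filter.Tendsto (fun t : ℝ =>
            (W * fromBlocks (mexp (t • J) * U11 * (mexp (t • A1r))ᵀ) 0 0
              (0 : Matrix (Fin ni) (Fin ri) ℝ)) i j) Filter.atTop (nhds 0) := by
      intro i j
      have hq : ∀ q : Fin nf ⊕ Fin ni,
          Filter.Tendsto (fun t : ℝ => W i q *
              (fromBlocks (mexp (t • J) * U11 * (mexp (t • A1r))ᵀ) 0 0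
                (0 : Matrix (Fin ni) (Fin ri) ℝ)) q j) Filter.atTop (nhds 0) := by
        intro q
        rcases q with a | a
        · rcases j with d | d
          · simp only [Matrix.fromBlocks_apply₁₁]
            simpa using (hMtend a d).const_mul (W i (Sum.inl a))
          · simp only [Matrix.fromBlocks_apply₁₂, Matrix.zero_apply, mul_zero]
            exact tendsto_const_nhds
        · rcases j with d | d
          · simp only [Matrix.fromBlocks_apply₂₁, Matrix.zero_apply, mul_zero]
            exact tendsto_const_nhds
          · simp only [Matrix.fromBlocks_apply₂₂, Matrix.zero_apply, mul_zero]
            exact tendsto_const_nhds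
      have := tendsto_finset_sum Finset.univ (fun q _ => hq q)
      simp only [Matrix.mul_apply]
      simpa using this
    -- integrability of the Sylvester integrand
    have hintA : MatIntegrableIoi (fun t => A * (FJ t * B * Brᵀ * (FJr t)ᵀ) * Erᵀ) :=
      matIntegrable_mul hGint
    have hintE : MatIntegrableIoi (fun t => E * (FJ t * B * Brᵀ * (FJr t)ᵀ) * Arᵀ) :=
      matIntegrable_mul hGint
    have hmulA : matIntIoi (fun t => A * (FJ t * B * Brᵀ * (FJr t)ᵀ) * Erᵀ)
        = A * Ptp * Erᵀ := by
      rw [hPtp]; exact matIntIoi_mul A _ Erᵀ hGint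
    have hmulE : matIntIoi (fun t => E * (FJ t * B * Brᵀ * (FJr t)ᵀ) * Arᵀ)
        = E * Ptp * Arᵀ := by
      rw [hPtp]; exact matIntIoi_mul E _ Arᵀ hGint
    have hadd : A * Ptp * Erᵀ + E * Ptp * Arᵀ
        = matIntIoi (fun t => A * (FJ t * B * Brᵀ * (FJr t)ᵀ) * Erᵀ
            + E * (FJ t * B * Brᵀ * (FJr t)ᵀ) * Arᵀ) := by
      rw [← hmulA, ← hmulE]
      ext i j
      show matIntIoi _ i j + matIntIoi _ i j = _
      simp only [matIntIoi, Matrix.of_apply, Matrix.add_apply]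
      exact (integral_add (hintA i j) (hintE i j)).symm
    rw [hadd]
    -- compute the integral entrywise via the FTC
    ext i j
    simp only [matIntIoi, Matrix.of_apply]
    have hint' : IntegrableOn (fun t : ℝ =>
        (W * fromBlocks
          (J * (mexp (t • J) * U11 * (mexp (t • A1r))ᵀ)
            + (mexp (t • J) * U11 * (mexp (t • A1r))ᵀ) * A1rᵀ) 0 0
              (0 : Matrix (Fin ni) (Fin ri) ℝ)) i j) (Set.Ioi 0) := by
      have h := (hintA i j).add (hintE i j)
      exact h.congr (Filter.Eventually.of_forall fun t => by
        show (A * (FJ t * B * Brᵀ * (FJr t)ᵀ) * Erᵀ) i j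
            + (E * (FJ t * B * Brᵀ * (FJr t)ᵀ) * Arᵀ) i j = _
        rw [← Matrix.add_apply, hS t])
    have hftc := integral_Ioi_of_hasDerivAt_of_tendsto'
      (f := fun t : ℝ => (W * fromBlocks (mexp (t • J) * U11 * (mexp (t • A1r))ᵀ) 0 0
        (0 : Matrix (Fin ni) (Fin ri) ℝ)) i j)
      (f' := fun t : ℝ => (W * fromBlocks
        (J * (mexp (t • J) * U11 * (mexp (t • A1r))ᵀ)
          + (mexp (t • J) * U11 * (mexp (t • A1r))ᵀ) * A1rᵀ) 0 0
              (0 : Matrix (Fin ni) (Fin ri) ℝ)) i j)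
      (fun x _ => hhderiv i j x) hint' (hhtend i j)
    calc (∫ t in Set.Ioi (0:ℝ),
          (A * (FJ t * B * Brᵀ * (FJr t)ᵀ) * Erᵀ
            + E * (FJ t * B * Brᵀ * (FJr t)ᵀ) * Arᵀ) i j)
        = ∫ t in Set.Ioi (0:ℝ), (W * fromBlocks
            (J * (mexp (t • J) * U11 * (mexp (t • A1r))ᵀ)
              + (mexp (t • J) * U11 * (mexp (t • A1r))ᵀ) * A1rᵀ) 0 0
              (0 : Matrix (Fin ni) (Fin ri) ℝ)) i j := by
          apply integral_congr_ae
          filter_upwards with t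
          rw [hS t]
      _ = 0 - (W * fromBlocks (mexp ((0:ℝ) • J) * U11 * (mexp ((0:ℝ) • A1r))ᵀ) 0 0
            (0 : Matrix (Fin ni) (Fin ri) ℝ)) i j := hftc
      _ = (-(Pl * B * Brᵀ * Plrᵀ)) i j := by
          rw [hPlB, zero_sub, mexp_zero_smul, mexp_zero_smul, Matrix.transpose_one,
            Matrix.one_mul, Matrix.mul_one, Matrix.neg_apply]
  · -- the projection identity
    have hfix : ∀ t : ℝ,
        Pr * (FJ t * B * Brᵀ * (FJr t)ᵀ) * Prrᵀ = FJ t * B * Brᵀ * (FJr t)ᵀ := by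
      intro t
      rw [key t, hPr, hPrrT]
      rw [show Tinv * fromBlocks 1 0 0 0 * T *
            (Tinv * fromBlocks (mexp (t • J) * U11 * (mexp (t • A1r))ᵀ) 0 0
              (0 : Matrix (Fin ni) (Fin ri) ℝ)) *
            fromBlocks (1 : Matrix (Fin rf) (Fin rf) ℝ) 0 0 (0 : Matrix (Fin ri) (Fin ri) ℝ)
          = Tinv * ((fromBlocks 1 0 0 0 : Matrix (Fin nf ⊕ Fin ni) (Fin nf ⊕ Fin ni) ℝ) * (T * (Tinv *
              (fromBlocks (mexp (t • J) * U11 * (mexp (t • A1r))ᵀ) 0 0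
                (0 : Matrix (Fin ni) (Fin ri) ℝ) *
                fromBlocks (1 : Matrix (Fin rf) (Fin rf) ℝ) 0 0
                  (0 : Matrix (Fin ri) (Fin ri) ℝ))))) by
        simp only [Matrix.mul_assoc]]
      rw [cancelT]
      congr 1
      simp [Matrix.fromBlocks_multiply]
    have hmulP : matIntIoi (fun t => Pr * (FJ t * B * Brᵀ * (FJr t)ᵀ) * Prrᵀ)
        = Pr * Ptp * Prrᵀ := by
      rw [hPtp]; exact matIntIoi_mul Pr _ Prrᵀ hGint
    rw [← hmulP, hPtp]
    exact congrArg matIntIoi (funext fun t => (hfix t).symm)
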